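/- Let G be a normed Abelian group with nonbranching optimal transport plans and let g ∈ G \ {0} be indecomposable. If 2g ≠ 0, then |ng| = n|g| for all natural numbers n. -/

import Mathlib

def IsGroupNorm {G : Type*} [AddCommGroup G] (ν : G → ℝ) : Prop :=
  (∀ g, 0 ≤ ν g) ∧ (∀ g h, ν (g + h) ≤ ν g + ν h) ∧
  (∀ g, ν (-g) = ν g) ∧ (∀ g, ν g = 0 ↔ g = 0)

def HasNBP {G : Type*} [AddCommGroup G] (ν : G → ℝ) : Prop :=
  ∀ (n : ℕ) (g : Fin n → G), (∑ i, g i) = 0 →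
    ∃ f : Fin n → Fin n → G,
      (∀ i j, f i j = - f j i) ∧ (∀ i, f i i = 0) ∧
      (∀ i, g i = ∑ j, f i j) ∧ (∀ i, ν (g i) = ∑ j, ν (f i j))

def HasCZT {G : Type*} [AddCommGroup G] (ν : G → ℝ) : Prop :=
  ∀ a b c : G, a + b + c = 0 →
    ν a + ν b = ν c ∨ ν a + ν c = ν b ∨ ν b + ν c = ν a

def IsIndecomposable {G : Type*} [AddCommGroup G] (ν : G → ℝ) (g : G) : Prop :=
  ∀ h : G, ν h + ν (g - h) = ν g → h = 0 ∨ h = g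

lemma norm_sum_le_aux {G : Type*} [AddCommGroup G] (ν : G → ℝ)
    (h0 : ν 0 = 0) (htri : ∀ g h, ν (g + h) ≤ ν g + ν h)
    {ι : Type*} (s : Finset ι) (x : ι → G) :
    ν (∑ k ∈ s, x k) ≤ ∑ k ∈ s, ν (x k) := by
  classical
  induction s using Finset.induction with
  | empty => simp [h0]
  | insert _ _ hmem ih =>
      rw [Finset.sum_insert hmem, Finset.sum_insert hmem]
      exact le_trans (htri _ _) (by linarith)

theorem stmt3 {G : Type*} [AddCommGroup G] (ν : G → ℝ) (hν : IsGroupNorm ν)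
    (hNBP : HasNBP ν) (g : G) (hg : g ≠ 0) (hind : IsIndecomposable ν g)
    (h2 : (2 : ℤ) • g ≠ 0) :
    ∀ n : ℕ, ν (n • g) = n * ν g := by
  classical
  obtain ⟨hpos, htri, hneg, hzero⟩ := hν
  have h0 : ν 0 = 0 := (hzero 0).mpr rfl
  intro n
  rcases Nat.eq_zero_or_pos n with rfl | hn
  · simp [h0]
  -- tuple: n copies of g and one -(n • g)
  set v : Fin (n + 1) → G := fun i => if i = Fin.last n then -(n • g) else g with hv
  have hvcast : ∀ i : Fin n, v i.castSucc = g := by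
    intro i
    simp [hv, (Fin.castSucc_lt_last i).ne]
  have hvlast : v (Fin.last n) = -(n • g) := by simp [hv]
  have hvsum : (∑ i, v i) = 0 := by
    rw [Fin.sum_univ_castSucc, hvlast]
    simp [hvcast]
  obtain ⟨f, hanti, hdiag, hsum, hnorm⟩ := hNBP (n + 1) v hvsum
  -- Step A: every entry of a g-row is 0 or g
  have stepA : ∀ (i : Fin n) (j : Fin (n + 1)),
      f i.castSucc j = 0 ∨ f i.castSucc j = g := by
    intro i j
    have hs : g = ∑ k, f i.castSucc k := by rw [← hvcast i]; exact hsum _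
    have hns : ν g = ∑ k, ν (f i.castSucc k) := by rw [← hvcast i]; exact hnorm _
    have hdiff := Finset.sum_eq_sum_sdiff_singleton_add (Finset.mem_univ j) (f i.castSucc)
    have hndiff := Finset.sum_eq_sum_sdiff_singleton_add (Finset.mem_univ j)
      (fun k => ν (f i.castSucc k))
    have hga : g - f i.castSucc j = ∑ k ∈ Finset.univ \ {j}, f i.castSucc k := by
      rw [hs, hdiff]; abel
    have h1 : ν (g - f i.castSucc j)
        ≤ ∑ k ∈ Finset.univ \ {j}, ν (f i.castSucc k) := by
      rw [hga]; exact norm_sum_le_aux ν h0 htri _ _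
    have h2' : ν g ≤ ν (f i.castSucc j) + ν (g - f i.castSucc j) := by
      have := htri (f i.castSucc j) (g - f i.castSucc j)
      simpa using this
    have heq : ν (f i.castSucc j) + ν (g - f i.castSucc j) = ν g := by
      have : (∑ k ∈ Finset.univ \ {j}, ν (f i.castSucc k))
          = ν g - ν (f i.castSucc j) := by rw [hns, hndiff]; ring
      rw [this] at h1
      linarith
    exact hind _ heq
  have h2g : ¬ (-g = g) := by
    intro h
    have hgg : g + g = 0 := by nth_rewrite 1 [← h]; exact neg_add_cancel g
    exact h2 ((two_zsmul g).trans hgg)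
  -- Step B: entries between two g-rows vanish
  have stepB : ∀ (i j : Fin n), f i.castSucc j.castSucc = 0 := by
    intro i j
    rcases stepA i j.castSucc with h | h
    · exact h
    · exfalso
      have : f j.castSucc i.castSucc = -g := by rw [hanti, h]
      rcases stepA j i.castSucc with h' | h'
      · rw [h'] at this; exact hg (by rw [← neg_eq_zero, ← this])
      · rw [h'] at this; exact h2g this.symm
  -- Step C: the last entry of each g-row is g
  have stepC : ∀ i : Fin n, f i.castSucc (Fin.last n) = g := by
    intro i
    have hs : g = ∑ k, f i.castSucc k := by rw [← hvcast i]; exact hsum _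
    rw [Fin.sum_univ_castSucc] at hs
    simp only [stepB] at hs
    simpa using hs.symm
  -- Finish
  have hlast : ν (v (Fin.last n)) = ∑ k, ν (f (Fin.last n) k) := hnorm _
  rw [hvlast, hneg, Fin.sum_univ_castSucc, hdiag] at hlast
  have : ∀ i : Fin n, ν (f (Fin.last n) i.castSucc) = ν g := by
    intro i
    rw [hanti, ← stepC i]
    exact hneg _
  rw [hlast]
  simp [this, h0]
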